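/- Let X be an affine variety of dimension n and C ⊆ X_∞ a subset whose image in X is a finite set of closed points. If C is thin, i.e., C ⊆ Z_∞ for a proper closed subscheme Z ⊊ X, then vol(C) = 0. -/

import Mathlib

open ENNReal

universe u

/-- An arc of the affine variety `Spec R`: a ring homomorphism `R → K[[t]]` for some
field `K`. -/
structure Arc (R : Type u) [CommRing R] : Type (u + 1) where
  K : Type u
  [fld : Field K]
  toHom : R →+* PowerSeries K

attribute [instance] Arc.fld

/-- `ord_γ(f)`: the order of vanishing of `f` along the arc `γ`. -/
noncomputable def arcOrd {R : Type u} [CommRing R] (γ : Arc R) (f : R) : ℕ∞ :=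
  (γ.toHom f).order

/-- The length `ℓ(R/I)` of the quotient `R/I`. -/
noncomputable def idealColength (R : Type u) [CommRing R] (I : Ideal R) : ℕ∞ :=
  (Order.krullDim (Submodule R (R ⧸ I))).unbotD 0

/-- The volume of a graded sequence of ideals in an `n`-dimensional ring. -/
noncomputable def volSeq (R : Type u) [CommRing R] (n : ℕ) (a : ℕ → Ideal R) : ℝ≥0∞ :=
  Filter.atTop.limsup fun m : ℕ =>
    ENat.toENNReal (idealColength R (a m)) * (Nat.factorial n) / (m : ℝ≥0∞) ^ n

open Module Order

variable {k : Type u} [Field k]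

section helpers
variable {A : Type u} [CommRing A] [Algebra k A]

/-- factor map between quotients as a k-linear map -/
noncomputable def quotFactorL (k : Type u) [Field k] {A : Type u} [CommRing A] [Algebra k A]
    {I J : Ideal A} (h : I ≤ J) : (A ⧸ I) →ₗ[k] (A ⧸ J) :=
  (Ideal.Quotient.liftₐ I (Ideal.Quotient.mkₐ k J)
    (fun a ha => by simpa using (Ideal.Quotient.eq_zero_iff_mem).2 (h ha))).toLinearMap

lemma quotFactorL_mk {I J : Ideal A} (h : I ≤ J) (a : A) :
    quotFactorL k h (Ideal.Quotient.mk I a) = Ideal.Quotient.mk J a := rfl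

lemma quotFactorL_surjective {I J : Ideal A} (h : I ≤ J) :
    Function.Surjective (quotFactorL k h) := by
  intro y
  obtain ⟨a, rfl⟩ := Ideal.Quotient.mk_surjective y
  exact ⟨Ideal.Quotient.mk I a, rfl⟩

lemma finiteQuot_mono {I J : Ideal A} (h : I ≤ J) [Module.Finite k (A ⧸ I)] :
    Module.Finite k (A ⧸ J) :=
  Module.Finite.of_surjective (quotFactorL k h) (quotFactorL_surjective h)

lemma finrank_le_of_surjectiveL {M N : Type u} [AddCommGroup M] [Module k M] [AddCommGroup N]
    [Module k N] [Module.Finite k M] (f : M →ₗ[k] N) (hf : Function.Surjective f) :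
    finrank k N ≤ finrank k M := by
  have h1 : LinearMap.range f = ⊤ := LinearMap.range_eq_top.2 hf
  have := LinearMap.finrank_range_le f
  rwa [h1, finrank_top] at this

lemma finrankQuot_mono {I J : Ideal A} (h : I ≤ J) [Module.Finite k (A ⧸ I)] :
    finrank k (A ⧸ J) ≤ finrank k (A ⧸ I) :=
  finrank_le_of_surjectiveL _ (quotFactorL_surjective h)

lemma finiteQuot_top : Module.Finite k (A ⧸ (⊤ : Ideal A)) := by
  have : Subsingleton (A ⧸ (⊤ : Ideal A)) := Ideal.Quotient.subsingleton_iff.2 rfl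
  infer_instance

lemma finrankQuot_top : finrank k (A ⧸ (⊤ : Ideal A)) = 0 := by
  have : Subsingleton (A ⧸ (⊤ : Ideal A)) := Ideal.Quotient.subsingleton_iff.2 rfl
  exact Module.finrank_zero_of_subsingleton

end helpers

section key
variable {A : Type u} [CommRing A] [Algebra k A]

/-- Key step: if `I2 = I ⊔ (x)` and `x·G ⊆ I`, then
`dim A/I ≤ dim A/I2 + dim A/G`. -/
lemma key_step (I G : Ideal A) (x : A)
    (hxG : ∀ g ∈ G, x * g ∈ I)
    (h2 : Module.Finite k (A ⧸ (I ⊔ Ideal.span {x})))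
    (hG : Module.Finite k (A ⧸ G)) :
    Module.Finite k (A ⧸ I) ∧
      finrank k (A ⧸ I) ≤ finrank k (A ⧸ (I ⊔ Ideal.span {x})) + finrank k (A ⧸ G) := by
  classical
  set V := A ⧸ I with hV
  -- the A-linear map a ↦ a • (x mod I)
  set fA : A →ₗ[A] V := LinearMap.toSpanSingleton A V (Ideal.Quotient.mk I x) with hfA
  have h0 : ∀ b : A, Ideal.Quotient.mk I b = (Ideal.Quotient.mkₐ A I).toLinearMap b := fun _ => rfl
  have hfA_apply : ∀ a : A, fA a = Ideal.Quotient.mk I (x * a) := by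
    intro a
    rw [hfA, LinearMap.toSpanSingleton_apply, h0, ← map_smul]
    simp [smul_eq_mul, mul_comm]
  have hker : (G : Submodule A A) ≤ LinearMap.ker fA := by
    intro g hg
    simp only [LinearMap.mem_ker, hfA_apply]
    exact Ideal.Quotient.eq_zero_iff_mem.2 (hxG g hg)
  set gA : (A ⧸ G) →ₗ[A] V := Submodule.liftQ G fA hker with hgA
  have hgA_mk : ∀ a : A, gA (Ideal.Quotient.mk G a) = Ideal.Quotient.mk I (x * a) := fun a =>
    hfA_apply a
  set gK : (A ⧸ G) →ₗ[k] V := gA.restrictScalars k with hgK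
  set W : Submodule k V := LinearMap.range gK with hW
  haveI : Module.Finite k W := Module.Finite.range gK
  have hWrank : finrank k W ≤ finrank k (A ⧸ G) := LinearMap.finrank_range_le gK
  set π : V →ₗ[k] (A ⧸ (I ⊔ Ideal.span {x})) := quotFactorL k le_sup_left with hπ
  have hπ_mk : ∀ a : A, π (Ideal.Quotient.mk I a) = Ideal.Quotient.mk _ a := fun _ => rfl
  have hkerπ : LinearMap.ker π ≤ W := by
    rintro v hv
    obtain ⟨a, rfl⟩ := Ideal.Quotient.mk_surjective v
    have ha : a ∈ I ⊔ Ideal.span {x} := by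
      rw [← Ideal.Quotient.eq_zero_iff_mem]
      exact hv
    obtain ⟨i, hi, c, hc, rfl⟩ := Submodule.mem_sup.1 ha
    obtain ⟨b, rfl⟩ := Ideal.mem_span_singleton'.1 hc
    refine ⟨Ideal.Quotient.mk G b, ?_⟩
    have hr : Ideal.Quotient.mk I (i + b * x) = Ideal.Quotient.mk I (x * b) := by
      rw [map_add, Ideal.Quotient.eq_zero_iff_mem.2 hi, zero_add, mul_comm]
    have : gK (Ideal.Quotient.mk G b) = gA (Ideal.Quotient.mk G b) := rfl
    rw [this, hgA_mk, ← hr]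
  -- V is finite-dimensional over k
  haveI hVfin : Module.Finite k V := by
    rw [Module.finite_def]
    refine Submodule.fg_of_fg_map_of_fg_inf_ker π ?_ ?_
    · exact IsNoetherian.noetherian _
    · rw [top_inf_eq]
      have h1 : Submodule.map W.subtype (Submodule.comap W.subtype (LinearMap.ker π)) =
          LinearMap.ker π := by
        rw [Submodule.map_comap_subtype]
        exact inf_eq_right.2 hkerπ
      rw [← h1]
      exact Submodule.FG.map _ (IsNoetherian.noetherian _)
  refine ⟨hVfin, ?_⟩
  have h3 := LinearMap.finrank_range_add_finrank_ker π
  have h4 : finrank k (LinearMap.range π) ≤ finrank k (A ⧸ (I ⊔ Ideal.span {x})) :=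
    Submodule.finrank_le _
  have h5 : finrank k (LinearMap.ker π) ≤ finrank k W :=
    Submodule.finrank_mono hkerπ
  show finrank k V ≤ _
  omega
end key

lemma length_le_of_strictMono_nat {α : Type*} [Preorder α] (p : LTSeries α)
    (F : α → ℕ) (hF : StrictMono F) (N : ℕ) (hN : ∀ a, F a ≤ N) : p.length ≤ N := by
  have key : ∀ i : Fin (p.length + 1), (i : ℕ) ≤ F (p i) := by
    intro i
    induction i using Fin.induction with
    | zero => exact Nat.zero_le _
    | succ j ih =>
      have hlt : F (p j.castSucc) < F (p j.succ) :=
        hF (p.strictMono (Fin.castSucc_lt_succ (i := j)))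
      simp only [Fin.coe_castSucc] at ih
      simp only [Fin.val_succ]
      omega
  have := key (Fin.last _)
  simp only [Fin.val_last] at this
  exact this.trans (hN _)

section dimdrop
variable {A : Type u} [CommRing A] [IsDomain A]

lemma ringKrullDim_quot_span_le {z : A} (hz : z ≠ 0)
    {d : ℕ} (hd : ringKrullDim A ≤ ((d + 1 : ℕ) : WithBot ℕ∞)) :
    ringKrullDim (A ⧸ Ideal.span {z}) ≤ (d : ℕ) := by
  rw [ringKrullDim, krullDim]
  refine iSup_le fun p => ?_
  let g : PrimeSpectrum (A ⧸ Ideal.span {z}) → PrimeSpectrum A := fun q =>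
    ⟨q.asIdeal.comap (Ideal.Quotient.mk _), Ideal.IsPrime.comap _⟩
  have hmono : Monotone g := fun a b hab => Ideal.comap_mono hab
  have hinj : Function.Injective g := by
    intro a b hab
    have := congrArg PrimeSpectrum.asIdeal hab
    exact PrimeSpectrum.ext
      (Ideal.comap_injective_of_surjective _ Ideal.Quotient.mk_surjective this)
  have hg : StrictMono g := hmono.strictMono_of_injective hinj
  have hbot : ∀ q : PrimeSpectrum (A ⧸ Ideal.span {z}),
      (⟨⊥, Ideal.bot_prime⟩ : PrimeSpectrum A) < g q := by
    intro q
    refine lt_of_le_of_ne bot_le ?_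
    intro h
    have hzmem : z ∈ (g q).asIdeal := by
      show z ∈ q.asIdeal.comap (Ideal.Quotient.mk _)
      simp only [Ideal.mem_comap]
      rw [show (Ideal.Quotient.mk (Ideal.span {z})) z = 0 from
        Ideal.Quotient.eq_zero_iff_mem.2 (Ideal.subset_span rfl)]
      exact q.asIdeal.zero_mem
    have h2 : (⊥ : Ideal A) = (g q).asIdeal := congrArg PrimeSpectrum.asIdeal h
    rw [← h2] at hzmem
    exact hz (Submodule.mem_bot A |>.1 hzmem)
  -- prepend bottom
  let q' : LTSeries (PrimeSpectrum A) := (p.map g hg).cons ⟨⊥, Ideal.bot_prime⟩ (by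
    have : (p.map g hg).head = g p.head := rfl
    rw [this]
    exact hbot _)
  have hlen := LTSeries.length_le_krullDim q'
  have hq'len : q'.length = p.length + 1 := by
    show 0 + p.length + 1 = p.length + 1
    omega
  rw [hq'len, ← ringKrullDim] at hlen
  have h2 : ((p.length + 1 : ℕ) : WithBot ℕ∞) ≤ ((d + 1 : ℕ) : WithBot ℕ∞) := hlen.trans hd
  have h3 : p.length + 1 ≤ d + 1 := by exact_mod_cast h2
  have h4 : p.length ≤ d := by omega
  exact_mod_cast h4

lemma span_eq_top_of_dim_zero {z : A} (hz : z ≠ 0) (hd : ringKrullDim A ≤ (0 : ℕ)) :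
    Ideal.span {z} = ⊤ := by
  by_contra h
  obtain ⟨m, hm, hle⟩ := Ideal.exists_le_maximal _ h
  have hzm : z ∈ m := hle (Ideal.subset_span rfl)
  have hbotm : (⟨⊥, Ideal.bot_prime⟩ : PrimeSpectrum A) < ⟨m, hm.isPrime⟩ := by
    refine lt_of_le_of_ne bot_le ?_
    intro hcon
    have h2 : (⊥ : Ideal A) = m := congrArg PrimeSpectrum.asIdeal hcon
    rw [← h2] at hzm
    exact hz (Submodule.mem_bot A |>.1 hzm)
  let q : LTSeries (PrimeSpectrum A) :=
    (RelSeries.singleton _ (⟨m, hm.isPrime⟩ : PrimeSpectrum A)).cons ⟨⊥, Ideal.bot_prime⟩ hbotm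
  have hlen := LTSeries.length_le_krullDim q
  have : q.length = 1 := rfl
  rw [this, ← ringKrullDim] at hlen
  have := hlen.trans hd
  norm_num at this
end dimdrop



variable {k : Type u} [Field k] {A : Type u} [CommRing A] [Algebra k A]

lemma idealColength_le_finrank (I : Ideal A) [Module.Finite k (A ⧸ I)] :
    idealColength A I ≤ (finrank k (A ⧸ I) : ℕ∞) := by
  have hdim : krullDim (Submodule A (A ⧸ I)) ≤ (finrank k (A ⧸ I) : ℕ) := by
    rw [krullDim]
    refine iSup_le fun p => ?_
    have : p.length ≤ finrank k (A ⧸ I) := by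
      refine length_le_of_strictMono_nat p
        (fun s => finrank k (Submodule.restrictScalars k s)) ?_ _ ?_
      · intro s t hst
        refine Submodule.finrank_lt_finrank_of_lt (s := s.restrictScalars k)
          (t := t.restrictScalars k) ?_
        exact lt_of_le_of_ne (fun x hx => hst.le hx)
          (fun h => hst.ne (Submodule.restrictScalars_injective k _ _ h))
      · intro s
        exact Submodule.finrank_le _
    exact_mod_cast this
  rw [idealColength]
  cases hk : krullDim (Submodule A (A ⧸ I)) with
  | bot => simp
  | coe x =>
    rw [hk] at hdim
    simp only [WithBot.unbotD_coe]
    exact WithBot.coe_le_coe.mp hdim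

/-- transport double quotient to quotient by sup. -/
noncomputable def doubleQuotLinearEquiv (I J : Ideal A) :
    ((A ⧸ I) ⧸ (J.map (Ideal.Quotient.mk I))) ≃ₗ[k] (A ⧸ (I ⊔ J)) := by
  have h : J.map (Ideal.Quotient.mkₐ k I) = J.map (Ideal.Quotient.mk I) := rfl
  exact (h ▸ (DoubleQuot.quotQuotEquivQuotSupₐ k I J)).toLinearEquiv

lemma finite_doubleQuot_iff (I J : Ideal A) :
    Module.Finite k ((A ⧸ I) ⧸ (J.map (Ideal.Quotient.mk I))) ↔
      Module.Finite k (A ⧸ (I ⊔ J)) :=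
  ⟨fun h => h.equiv (doubleQuotLinearEquiv I J), fun h => h.equiv (doubleQuotLinearEquiv I J).symm⟩

lemma finrank_doubleQuot (I J : Ideal A) :
    finrank k ((A ⧸ I) ⧸ (J.map (Ideal.Quotient.mk I))) = finrank k (A ⧸ (I ⊔ J)) :=
  (doubleQuotLinearEquiv (k := k) I J).finrank_eq

/-- Growth bound statement: quotients by powers of a finite-colength ideal in a
`≤ d`-dimensional Noetherian algebra have `k`-dimension `O(p^d)`. -/
def GB (k : Type u) [Field k] (d : ℕ) : Prop :=
  ∀ (A : Type u) [CommRing A] [IsNoetherianRing A] [Algebra k A] (J : Ideal A),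
    Module.Finite k (A ⧸ J) → ringKrullDim A ≤ ((d : ℕ) : WithBot ℕ∞) →
      ∃ C : ℕ, ∀ p : ℕ, 0 < p →
        Module.Finite k (A ⧸ J ^ p) ∧ finrank k (A ⧸ J ^ p) ≤ C * p ^ d

lemma gbDom (d : ℕ) (IH : ∀ d' < d, GB k d') :
    ∀ (A : Type u) [CommRing A] [IsDomain A] [IsNoetherianRing A] [Algebra k A] (J : Ideal A),
    Module.Finite k (A ⧸ J) → ringKrullDim A ≤ ((d : ℕ) : WithBot ℕ∞) →
      ∃ C : ℕ, ∀ p : ℕ, 0 < p →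
        Module.Finite k (A ⧸ J ^ p) ∧ finrank k (A ⧸ J ^ p) ≤ C * p ^ d := by
  intro A _ _ _ _ J hJfin hdim
  by_cases hz : ∃ z ∈ J, z ≠ (0 : A)
  · obtain ⟨z, hzJ, hz0⟩ := hz
    cases d with
    | zero =>
      have htop : Ideal.span {z} = ⊤ := span_eq_top_of_dim_zero hz0 hdim
      have hJtop : J = ⊤ := by
        rw [eq_top_iff, ← htop]
        exact Ideal.span_le.2 (by simpa using hzJ)
      refine ⟨0, fun p hp => ?_⟩
      have hpow : J ^ p = ⊤ := by rw [hJtop]; exact Ideal.top_pow ..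
      rw [hpow]
      haveI : Subsingleton (A ⧸ (⊤ : Ideal A)) := Ideal.Quotient.subsingleton_iff.2 rfl
      exact ⟨inferInstance, by simp [Module.finrank_zero_of_subsingleton]⟩
    | succ d' =>
      have hdim' : ringKrullDim (A ⧸ Ideal.span {z}) ≤ ((d' : ℕ) : WithBot ℕ∞) :=
        ringKrullDim_quot_span_le hz0 hdim
      have hsupJ : Ideal.span {z} ⊔ J = J := sup_eq_right.2 (Ideal.span_le.2 (by simpa using hzJ))
      have hfinbar : Module.Finite k
          ((A ⧸ Ideal.span {z}) ⧸ (J.map (Ideal.Quotient.mk (Ideal.span {z})))) := by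
        rw [finite_doubleQuot_iff, hsupJ]
        exact hJfin
      obtain ⟨C', hC'⟩ := IH d' (Nat.lt_succ_self d') (A ⧸ Ideal.span {z})
        (J.map (Ideal.Quotient.mk (Ideal.span {z}))) hfinbar hdim'
      have hB : ∀ q : ℕ, 0 < q → Module.Finite k (A ⧸ (Ideal.span {z} ⊔ J ^ q)) ∧
          finrank k (A ⧸ (Ideal.span {z} ⊔ J ^ q)) ≤ C' * q ^ d' := by
        intro q hq
        obtain ⟨h1, h2⟩ := hC' q hq
        rw [← Ideal.map_pow] at h1 h2
        rw [finite_doubleQuot_iff] at h1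
        rw [finrank_doubleQuot] at h2
        exact ⟨h1, h2⟩
      refine ⟨C', fun p hp => ?_⟩
      have main : ∀ j, j ≤ p → Module.Finite k (A ⧸ (J ^ p ⊔ Ideal.span {z ^ j})) ∧
          finrank k (A ⧸ (J ^ p ⊔ Ideal.span {z ^ j})) ≤ j * (C' * p ^ d') := by
        intro j
        induction j with
        | zero =>
          intro _
          have h0 : J ^ p ⊔ Ideal.span {z ^ 0} = ⊤ := by
            simp [Ideal.span_singleton_one]
          rw [h0]
          haveI : Subsingleton (A ⧸ (⊤ : Ideal A)) := Ideal.Quotient.subsingleton_iff.2 rfl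
          exact ⟨inferInstance, by simp [Module.finrank_zero_of_subsingleton]⟩
        | succ j ihj =>
          intro hj1
          have hjp : j < p := hj1
          obtain ⟨hfin_j, hrank_j⟩ := ihj hjp.le
          obtain ⟨hfin_G, hrank_G⟩ := hB (p - j) (by omega)
          have hsup : (J ^ p ⊔ Ideal.span {z ^ (j + 1)}) ⊔ Ideal.span {z ^ j}
              = J ^ p ⊔ Ideal.span {z ^ j} := by
            rw [sup_assoc]
            congr 1
            exact sup_eq_right.2 (Ideal.span_singleton_le_span_singleton.2 ⟨z, pow_succ z j⟩)
          have hxG : ∀ g ∈ (Ideal.span {z} ⊔ J ^ (p - j)),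
              z ^ j * g ∈ J ^ p ⊔ Ideal.span {z ^ (j + 1)} := by
            intro g hg
            obtain ⟨u, hu, v, hv, rfl⟩ := Submodule.mem_sup.1 hg
            rw [mul_add]
            refine Submodule.add_mem _ ?_ ?_
            · obtain ⟨c, rfl⟩ := Ideal.mem_span_singleton'.1 hu
              refine Submodule.mem_sup_right (Ideal.mem_span_singleton'.2 ⟨c, ?_⟩)
              ring
            · refine Submodule.mem_sup_left ?_
              have h1 : z ^ j ∈ J ^ j := Ideal.pow_mem_pow hzJ j
              have h2 := Ideal.mul_mem_mul h1 hv
              rw [← pow_add] at h2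
              rwa [show j + (p - j) = p by omega] at h2
          have hfin2 : Module.Finite k
              (A ⧸ ((J ^ p ⊔ Ideal.span {z ^ (j + 1)}) ⊔ Ideal.span {z ^ j})) := by
            rw [hsup]; exact hfin_j
          obtain ⟨hfinI, hrankI⟩ := key_step (k := k) (J ^ p ⊔ Ideal.span {z ^ (j + 1)})
            (Ideal.span {z} ⊔ J ^ (p - j)) (z ^ j) hxG hfin2 hfin_G
          refine ⟨hfinI, ?_⟩
          rw [hsup] at hrankI
          have hple : C' * (p - j) ^ d' ≤ C' * p ^ d' :=
            Nat.mul_le_mul_left _ (Nat.pow_le_pow_left (by omega) _)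
          calc finrank k (A ⧸ (J ^ p ⊔ Ideal.span {z ^ (j + 1)}))
              ≤ j * (C' * p ^ d') + C' * (p - j) ^ d' := by omega
            _ ≤ (j + 1) * (C' * p ^ d') := by nlinarith
      obtain ⟨hfin, hrank⟩ := main p le_rfl
      have hfinal : J ^ p ⊔ Ideal.span {z ^ p} = J ^ p := by
        refine sup_eq_left.2 (Ideal.span_le.2 ?_)
        simpa using Ideal.pow_mem_pow hzJ p
      rw [hfinal] at hfin hrank
      refine ⟨hfin, ?_⟩
      calc finrank k (A ⧸ J ^ p) ≤ p * (C' * p ^ d') := hrank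
        _ = C' * p ^ (d' + 1) := by ring
  · push_neg at hz
    have hJbot : J = ⊥ := le_bot_iff.1 fun x hx => (Submodule.mem_bot A).2 (hz x hx)
    refine ⟨finrank k (A ⧸ J), fun p hp => ?_⟩
    have hpow : J ^ p = J := by
      rw [hJbot, ← Ideal.zero_eq_bot, zero_pow hp.ne']
    rw [hpow]
    exact ⟨hJfin, Nat.le_mul_of_pos_right _ (Nat.pow_pos hp)⟩

lemma gbAll (k : Type u) [Field k] : ∀ d : ℕ, GB k d := by
  intro d
  induction d using Nat.strong_induction_on with
  | _ d IH =>
  intro A _ _ _ J hJfin hdim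
  have main : ∀ I : Ideal A, ∃ C : ℕ, ∀ p : ℕ, 0 < p →
      Module.Finite k (A ⧸ (I ⊔ J ^ p)) ∧ finrank k (A ⧸ (I ⊔ J ^ p)) ≤ C * p ^ d := by
    intro I
    induction I using IsNoetherian.induction with
    | _ I hind =>
    by_cases hItop : I = ⊤
    · refine ⟨0, fun p hp => ?_⟩
      have h0 : I ⊔ J ^ p = ⊤ := by rw [hItop, top_sup_eq]
      rw [h0]
      haveI : Subsingleton (A ⧸ (⊤ : Ideal A)) := Ideal.Quotient.subsingleton_iff.2 rfl
      exact ⟨inferInstance, by simp [Module.finrank_zero_of_subsingleton]⟩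
    · haveI := Ideal.Quotient.nontrivial_iff.mpr hItop
      obtain ⟨P, hP⟩ := associatedPrimes.nonempty A (A ⧸ I)
      obtain ⟨hPprime, xb, hann⟩ := isAssociatedPrime_iff.1 hP
      obtain ⟨x, rfl⟩ := Ideal.Quotient.mk_surjective xb
      rw [Submodule.bot_colon'] at hann
      haveI : P.IsPrime := hPprime
      have hxI : x ∉ I := by
        intro hx
        have hx0 : Ideal.Quotient.mk I x = 0 := Ideal.Quotient.eq_zero_iff_mem.2 hx
        have : P = ⊤ := by
          rw [eq_top_iff]
          intro r _
          rw [hann, hx0]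
          exact (Submodule.mem_annihilator_span_singleton _ _).2 (smul_zero r)
        exact hPprime.ne_top this
      have hPx : ∀ g ∈ P, x * g ∈ I := by
        intro g hg
        rw [hann] at hg
        have h1 : g • (Ideal.Quotient.mk I x) = 0 :=
          (Submodule.mem_annihilator_span_singleton _ _).1 hg
        have h2 : (Ideal.Quotient.mkₐ A I).toLinearMap (g • x) = 0 := by
          rw [map_smul]
          exact h1
        have h3 : Ideal.Quotient.mk I (g * x) = 0 := by
          rw [← smul_eq_mul]
          exact h2
        rw [mul_comm]
        exact Ideal.Quotient.eq_zero_iff_mem.1 h3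
      -- bounds from the domain A ⧸ P
      have hfinPJ : Module.Finite k (A ⧸ (P ⊔ J)) :=
        finiteQuot_mono (le_sup_right : J ≤ P ⊔ J)
      have hfinbar : Module.Finite k ((A ⧸ P) ⧸ (J.map (Ideal.Quotient.mk P))) :=
        (finite_doubleQuot_iff _ _).2 hfinPJ
      obtain ⟨C2, hC2⟩ := gbDom d IH (A ⧸ P) (J.map (Ideal.Quotient.mk P)) hfinbar
        (le_trans (ringKrullDim_quotient_le P) hdim)
      have hG : ∀ p : ℕ, 0 < p → Module.Finite k (A ⧸ (P ⊔ J ^ p)) ∧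
          finrank k (A ⧸ (P ⊔ J ^ p)) ≤ C2 * p ^ d := by
        intro p hp
        obtain ⟨h1, h2⟩ := hC2 p hp
        rw [← Ideal.map_pow] at h1 h2
        rw [finite_doubleQuot_iff] at h1
        rw [finrank_doubleQuot] at h2
        exact ⟨h1, h2⟩
      -- induction hypothesis at the strictly bigger ideal I ⊔ (x)
      have hlt : I < I ⊔ Ideal.span {x} := by
        refine lt_of_le_of_ne le_sup_left ?_
        intro h
        exact hxI (h ▸ Submodule.mem_sup_right (Ideal.subset_span rfl))
      obtain ⟨C1, hC1⟩ := hind (I ⊔ Ideal.span {x}) hlt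
      refine ⟨C1 + C2, fun p hp => ?_⟩
      obtain ⟨hfin1, hrank1⟩ := hC1 p hp
      obtain ⟨hfin2, hrank2⟩ := hG p hp
      have hsup : (I ⊔ J ^ p) ⊔ Ideal.span {x} = (I ⊔ Ideal.span {x}) ⊔ J ^ p :=
        sup_right_comm I (J ^ p) (Ideal.span {x})
      have hxG : ∀ g ∈ (P ⊔ J ^ p), x * g ∈ I ⊔ J ^ p := by
        intro g hg
        obtain ⟨u, hu, v, hv, rfl⟩ := Submodule.mem_sup.1 hg
        rw [mul_add]
        exact Submodule.add_mem _ (Submodule.mem_sup_left (hPx u hu))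
          (Submodule.mem_sup_right (Ideal.mul_mem_left _ x hv))
      have hfin2' : Module.Finite k (A ⧸ ((I ⊔ J ^ p) ⊔ Ideal.span {x})) := by
        rw [hsup]; exact hfin1
      obtain ⟨hfinI, hrankI⟩ := key_step (k := k) (I ⊔ J ^ p) (P ⊔ J ^ p) x hxG hfin2' hfin2
      refine ⟨hfinI, ?_⟩
      rw [hsup] at hrankI
      calc finrank k (A ⧸ (I ⊔ J ^ p))
          ≤ C1 * p ^ d + C2 * p ^ d := by omega
        _ = (C1 + C2) * p ^ d := by ring
  obtain ⟨C, hC⟩ := main ⊥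
  refine ⟨C, fun p hp => ?_⟩
  have h0 : (⊥ : Ideal A) ⊔ J ^ p = J ^ p := bot_sup_eq _
  obtain ⟨h1, h2⟩ := hC p hp
  rw [h0] at h1 h2
  exact ⟨h1, h2⟩


section arcs
variable {R : Type u} [CommRing R]

/-- the ideal of elements of arc-order at least `p`. -/
noncomputable def arcOrdIdeal (γ : Arc R) (p : ℕ) : Ideal R where
  carrier := {f | (p : ℕ∞) ≤ arcOrd γ f}
  zero_mem' := by
    show (p : ℕ∞) ≤ arcOrd γ 0
    unfold arcOrd
    rw [map_zero, PowerSeries.order_zero]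
    exact le_top
  add_mem' := by
    intro a b ha hb
    show (p : ℕ∞) ≤ arcOrd γ (a + b)
    unfold arcOrd
    rw [map_add]
    exact le_trans (le_min ha hb) (PowerSeries.min_order_le_order_add _ _)
  smul_mem' := by
    intro c f hf
    show (p : ℕ∞) ≤ arcOrd γ (c * f)
    unfold arcOrd
    rw [map_mul, PowerSeries.order_mul]
    exact le_add_self.trans' hf

lemma mem_arcOrdIdeal {γ : Arc R} {p : ℕ} {f : R} :
    f ∈ arcOrdIdeal γ p ↔ (p : ℕ∞) ≤ arcOrd γ f := Iff.rfl

lemma arcOrdIdeal_mul_le (γ : Arc R) (a b : ℕ) :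
    arcOrdIdeal γ a * arcOrdIdeal γ b ≤ arcOrdIdeal γ (a + b) := by
  rw [Ideal.mul_le]
  intro r hr s hs
  rw [mem_arcOrdIdeal] at *
  unfold arcOrd at *
  rw [map_mul, PowerSeries.order_mul, Nat.cast_add]
  exact add_le_add hr hs

lemma pow_le_arcOrdIdeal {γ : Arc R} {J : Ideal R} (h : J ≤ arcOrdIdeal γ 1) (p : ℕ) :
    J ^ p ≤ arcOrdIdeal γ p := by
  induction p with
  | zero =>
    intro f _
    rw [mem_arcOrdIdeal]
    simp
  | succ p ih =>
    rw [pow_succ]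
    exact le_trans (Ideal.mul_mono ih h) (arcOrdIdeal_mul_le γ p 1)
end arcs

section resfield
variable {k : Type u} [Field k] {R : Type u} [CommRing R] [Algebra k R]

lemma finiteQuotInf {I1 I2 : Ideal R} (h1 : Module.Finite k (R ⧸ I1))
    (h2 : Module.Finite k (R ⧸ I2)) : Module.Finite k (R ⧸ (I1 ⊓ I2)) := by
  set Φ : (R ⧸ (I1 ⊓ I2)) →ₗ[k] (R ⧸ I1) × (R ⧸ I2) :=
    LinearMap.prod (quotFactorL k inf_le_left) (quotFactorL k inf_le_right) with hΦ
  have hinj : Function.Injective Φ := by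
    rw [← LinearMap.ker_eq_bot, eq_bot_iff]
    rintro v hv
    obtain ⟨a, rfl⟩ := Ideal.Quotient.mk_surjective v
    simp only [LinearMap.mem_ker, hΦ, LinearMap.prod_apply, Function.prod, Prod.mk_eq_zero] at hv
    obtain ⟨hv1, hv2⟩ := hv
    have ha1 : a ∈ I1 := Ideal.Quotient.eq_zero_iff_mem.1 hv1
    have ha2 : a ∈ I2 := Ideal.Quotient.eq_zero_iff_mem.1 hv2
    simpa using Ideal.Quotient.eq_zero_iff_mem.2 (Submodule.mem_inf.2 ⟨ha1, ha2⟩)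
  haveI : Module.Finite k ((R ⧸ I1) × (R ⧸ I2)) := Module.Finite.prod
  exact Module.Finite.equiv (LinearEquiv.ofInjective Φ hinj).symm

lemma finiteQuotMaximal (hfg : Algebra.FiniteType k R) (m : Ideal R) (hm : m.IsMaximal) :
    Module.Finite k (R ⧸ m) := by
  haveI := hm
  letI : Field (R ⧸ m) := Ideal.Quotient.field m
  haveI : Algebra.FiniteType k (R ⧸ m) :=
    by haveI := hfg; exact Algebra.FiniteType.of_surjective (Ideal.Quotient.mkₐ k m) (Ideal.Quotient.mkₐ_surjective k m)
  exact finite_of_finite_type_of_isJacobsonRing k (R ⧸ m)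

lemma finiteQuotFinsetInf (hfg : Algebra.FiniteType k R) (s : Finset (Ideal R))
    (hs : ∀ m ∈ s, m.IsMaximal) : Module.Finite k (R ⧸ (s.inf id)) := by
  classical
  induction s using Finset.induction_on with
  | empty =>
    rw [Finset.inf_empty]
    exact finiteQuot_top
  | @insert m s' hm ih =>
    rw [Finset.inf_insert]
    exact finiteQuotInf (finiteQuotMaximal hfg m (hs m (Finset.mem_insert_self m s')))
      (ih fun x hx => hs x (Finset.mem_insert_of_mem hx))
end resfield

/-- Let `C ⊆ X_∞` be a set of arcs on an `n`-dimensional affine variety `X = Spec R`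
whose image in `X` is a finite set of closed points.  If `C` is thin, i.e. contained in
`Z_∞` for a proper closed subscheme `Z ⊊ X` (cut out by a nonzero ideal `I_Z`), then
`vol(C) = 0`. -/
theorem stmt_17 {k : Type u} [Field k] [IsAlgClosed k] [CharZero k]
    (R : Type u) [CommRing R] [IsDomain R] [Algebra k R]
    (hfg : Algebra.FiniteType k R) (n : ℕ) (hdim : ringKrullDim R = n)
    (C : Set (Arc R))
    (hfinpts : ∃ s : Finset (Ideal R), (∀ m ∈ s, m.IsMaximal) ∧
      ∀ γ ∈ C, ∃ m ∈ s, ∀ f : R, 0 < arcOrd γ f ↔ f ∈ m)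
    (IZ : Ideal R) (hIZ : IZ ≠ ⊥)
    (hthin : ∀ γ ∈ C, ∀ f ∈ IZ, arcOrd γ f = ⊤)
    (b : ℕ → Ideal R)
    (hb : ∀ (p : ℕ) (f : R), f ∈ b p ↔ ∀ γ ∈ C, (p : ℕ∞) ≤ arcOrd γ f) :
    volSeq R n b = 0 := by
  classical
  haveI hfg' := hfg
  haveI hNoeth : IsNoetherianRing R := Algebra.FiniteType.isNoetherianRing k R
  obtain ⟨s, hsmax, hCpts⟩ := hfinpts
  set J : Ideal R := s.inf id with hJdef
  have hJfin : Module.Finite k (R ⧸ J) := finiteQuotFinsetInf hfg s hsmax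
  have hzex : ∃ z ∈ IZ, z ≠ (0 : R) := by
    by_contra h
    push_neg at h
    exact hIZ (le_bot_iff.1 fun x hx => (Submodule.mem_bot R).2 (h x hx))
  obtain ⟨z, hzIZ, hz0⟩ := hzex
  have hle : ∀ p : ℕ, Ideal.span {z} ⊔ J ^ p ≤ b p := by
    intro p f hf
    rw [hb]
    intro γ hγ
    have h1 : Ideal.span {z} ≤ arcOrdIdeal γ p := by
      rw [Ideal.span_le]
      intro w hw
      have hw' : w = z := hw
      subst hw'
      rw [SetLike.mem_coe, mem_arcOrdIdeal, hthin γ hγ w hzIZ]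
      exact le_top
    have h2 : J ^ p ≤ arcOrdIdeal γ p := by
      obtain ⟨m, hms, hmiff⟩ := hCpts γ hγ
      refine pow_le_arcOrdIdeal ?_ p
      refine le_trans (Finset.inf_le hms : J ≤ m) ?_
      intro g hg
      rw [mem_arcOrdIdeal]
      have hpos : (0 : ℕ∞) < arcOrd γ g := (hmiff g).2 hg
      have h01 : (0 : ℕ∞) + 1 ≤ arcOrd γ g := Order.add_one_le_of_lt hpos
      simpa using h01
    exact (sup_le h1 h2) hf
  cases n with
  | zero =>
    have htop : Ideal.span {z} = ⊤ := span_eq_top_of_dim_zero hz0 hdim.le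
    have hbtop : ∀ p : ℕ, b p = ⊤ := fun p =>
      eq_top_iff.2 (le_trans (le_trans (le_of_eq htop.symm) le_sup_left) (hle p))
    have hl0 : ∀ p : ℕ, idealColength R (b p) = 0 := by
      intro p
      haveI hss : Subsingleton (R ⧸ b p) := by
        rw [hbtop p]
        exact Ideal.Quotient.subsingleton_iff.2 rfl
      haveI : Module.Finite k (R ⧸ b p) := Module.Finite.of_surjective
        (0 : (R ⧸ b p) →ₗ[k] (R ⧸ b p)) (fun y => ⟨y, Subsingleton.elim _ _⟩)
      have h := idealColength_le_finrank (k := k) (b p)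
      rw [Module.finrank_zero_of_subsingleton] at h
      exact le_antisymm (by exact_mod_cast h) zero_le
    unfold volSeq
    have : (fun m : ℕ => ENat.toENNReal (idealColength R (b m)) * (Nat.factorial 0) /
        (m : ℝ≥0∞) ^ 0) = fun _ => 0 := by
      funext m
      rw [hl0 m]
      simp
    rw [this]
    exact Filter.limsup_const 0
  | succ n' =>
    have hdim' : ringKrullDim (R ⧸ Ideal.span {z}) ≤ ((n' : ℕ) : WithBot ℕ∞) :=
      ringKrullDim_quot_span_le hz0 hdim.le
    have hfinbar : Module.Finite k
        ((R ⧸ Ideal.span {z}) ⧸ (J.map (Ideal.Quotient.mk (Ideal.span {z})))) := by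
      rw [finite_doubleQuot_iff]
      exact finiteQuot_mono (le_sup_right : J ≤ Ideal.span {z} ⊔ J)
    obtain ⟨Cb, hCb⟩ := gbAll k n' (R ⧸ Ideal.span {z})
      (J.map (Ideal.Quotient.mk (Ideal.span {z}))) hfinbar hdim'
    have hBB : ∀ p : ℕ, 0 < p → Module.Finite k (R ⧸ (Ideal.span {z} ⊔ J ^ p)) ∧
        finrank k (R ⧸ (Ideal.span {z} ⊔ J ^ p)) ≤ Cb * p ^ n' := by
      intro p hp
      obtain ⟨h1, h2⟩ := hCb p hp
      rw [← Ideal.map_pow] at h1 h2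
      rw [finite_doubleQuot_iff] at h1
      rw [finrank_doubleQuot] at h2
      exact ⟨h1, h2⟩
    have hlp : ∀ p : ℕ, 0 < p → idealColength R (b p) ≤ ((Cb * p ^ n' : ℕ) : ℕ∞) := by
      intro p hp
      obtain ⟨h1, h2⟩ := hBB p hp
      haveI := h1
      haveI : Module.Finite k (R ⧸ b p) := finiteQuot_mono (hle p)
      refine le_trans (idealColength_le_finrank (k := k) (b p)) ?_
      have h3 : finrank k (R ⧸ b p) ≤ finrank k (R ⧸ (Ideal.span {z} ⊔ J ^ p)) :=
        finrankQuot_mono (hle p)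
      exact_mod_cast le_trans h3 h2
    -- analytic conclusion
    set K : ℝ≥0∞ := (Cb : ℝ≥0∞) * ((n' + 1).factorial : ℝ≥0∞) with hK
    have hKtop : K ≠ ⊤ := by
      rw [hK]
      exact ENNReal.mul_ne_top (ENNReal.natCast_ne_top _) (ENNReal.natCast_ne_top _)
    have hev : ∀ᶠ p in Filter.atTop, (ENat.toENNReal (idealColength R (b p)) *
        ((n' + 1).factorial : ℝ≥0∞) / (p : ℝ≥0∞) ^ (n' + 1)) ≤ K / (p : ℝ≥0∞) := by
      rw [Filter.eventually_atTop]
      refine ⟨1, fun p hp => ?_⟩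
      have hp0 : (0 : ℕ) < p := hp
      have hnum : ENat.toENNReal (idealColength R (b p)) ≤ ((Cb * p ^ n' : ℕ) : ℝ≥0∞) := by
        have := hlp p hp0
        exact_mod_cast ENat.toENNReal_le.2 this
      have hb1 : ENat.toENNReal (idealColength R (b p)) * ((n' + 1).factorial : ℝ≥0∞) /
          (p : ℝ≥0∞) ^ (n' + 1) ≤ ((Cb * p ^ n' : ℕ) : ℝ≥0∞) * ((n' + 1).factorial : ℝ≥0∞) /
          (p : ℝ≥0∞) ^ (n' + 1) :=
        ENNReal.div_le_div_right (mul_le_mul_left hnum _) _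
      refine hb1.trans (le_of_eq ?_)
      have hpow0 : ((p : ℝ≥0∞)) ^ n' ≠ 0 := by
        apply pow_ne_zero
        simpa using Nat.pos_iff_ne_zero.1 hp0
      have hpowt : ((p : ℝ≥0∞)) ^ n' ≠ ⊤ := by
        exact ENNReal.pow_ne_top (ENNReal.natCast_ne_top _)
      have hnumeq : ((Cb * p ^ n' : ℕ) : ℝ≥0∞) * ((n' + 1).factorial : ℝ≥0∞)
          = K * (p : ℝ≥0∞) ^ n' := by
        rw [hK, Nat.cast_mul, Nat.cast_pow, mul_right_comm]
      have hdeneq : (p : ℝ≥0∞) ^ (n' + 1) = (p : ℝ≥0∞) * (p : ℝ≥0∞) ^ n' := by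
        rw [pow_succ, mul_comm]
      calc ((Cb * p ^ n' : ℕ) : ℝ≥0∞) * ((n' + 1).factorial : ℝ≥0∞) / (p : ℝ≥0∞) ^ (n' + 1)
          = (K * (p : ℝ≥0∞) ^ n') / ((p : ℝ≥0∞) * (p : ℝ≥0∞) ^ n') := by
            rw [hnumeq, hdeneq]
        _ = K / (p : ℝ≥0∞) := ENNReal.mul_div_mul_right _ _ hpow0 hpowt
    have htend : Filter.Tendsto (fun p : ℕ => K / (p : ℝ≥0∞)) Filter.atTop (nhds 0) := by
      have h1 : Filter.Tendsto (fun p : ℕ => (p : ℝ≥0∞)⁻¹) Filter.atTop (nhds 0) :=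
        ENNReal.tendsto_inv_nat_nhds_zero
      have h2 := ENNReal.Tendsto.const_mul h1 (Or.inr hKtop)
      rw [mul_zero] at h2
      simpa [div_eq_mul_inv] using h2
    unfold volSeq
    refine le_antisymm ?_ zero_le
    calc Filter.atTop.limsup (fun m : ℕ => ENat.toENNReal (idealColength R (b m)) *
          ((n' + 1).factorial : ℝ≥0∞) / (m : ℝ≥0∞) ^ (n' + 1))
        ≤ Filter.atTop.limsup (fun p : ℕ => K / (p : ℝ≥0∞)) := Filter.limsup_le_limsup hev
      _ = 0 := htend.limsup_eq
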